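/- arXiv:2112.02548 — 3 statements merged into one kernel-verified Lean document; each statement's English description precedes it below -/
import Mathlib

section
/- Let μ be a probability measure and (νₙ)ₙ a sequence of probability measures on a measurable space such that d_JS(νₙ‖μ) → 0 as n → ∞, where d_JS(νₙ‖μ) = d_KL(νₙ‖mₙ) + d_KL(μ‖mₙ) with midpoint measure mₙ = (1/2)·μ + (1/2)·νₙ and d_KL the Kullback–Leibler divergence. Then sup { |∫ ψ dνₙ − ∫ ψ dμ| : ψ measurable, sup|ψ| ≤ 1 } → 0 as n → ∞; in particular, for every measurable ψ with sup|ψ| ≤ 1, the expectations ∫ ψ dνₙ converge to ∫ ψ dμ, uniformly over all such ψ. -/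
open MeasureTheory ENNReal Filter

/-- The Kullback–Leibler divergence `d_KL(ρ‖σ) = ∫ log(dρ/dσ) dρ` if `ρ ≪ σ` (and the
log-likelihood ratio is integrable, which for probability measures fails only when the
divergence is infinite), and `+∞` otherwise. -/
noncomputable def klDiv {Ω : Type*} [MeasurableSpace Ω] (ρ σ : Measure Ω) : ℝ≥0∞ :=
  open scoped Classical in
  if ρ ≪ σ ∧ Integrable (llr ρ σ) ρ then ENNReal.ofReal (∫ x, llr ρ σ x ∂ρ) else ⊤

/-- The total variation norm `‖ν − μ‖_TV`, i.e. the supremum of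
`|∫ ψ dν − ∫ ψ dμ|` over all measurable `ψ` with `sup |ψ| ≤ 1`. -/
noncomputable def tvNorm {Ω : Type*} [MeasurableSpace Ω] (ν μ : Measure Ω) : ℝ :=
  sSup {r : ℝ | ∃ ψ : Ω → ℝ, Measurable ψ ∧ (∀ x, |ψ x| ≤ 1) ∧
    r = |∫ x, ψ x ∂ν - ∫ x, ψ x ∂μ|}

section Aux
open Real intervalIntegral


lemma aux_log_ge {t : ℝ} (h1 : 1 ≤ t) (h2 : t ≤ 2) : (t - 1) / 2 ≤ Real.log t := by
  have ht : 0 < t := by linarith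
  have h := Real.one_sub_inv_le_log_of_pos ht
  have hinv : t⁻¹ ≤ 1 := by rw [inv_le_one_iff₀]; right; linarith
  have : (t - 1) / 2 ≤ 1 - t⁻¹ := by
    rw [div_le_iff₀ (by norm_num : (0:ℝ) < 2)]
    have : t * t⁻¹ = 1 := mul_inv_cancel₀ ht.ne'
    nlinarith [inv_pos.2 ht]
  linarith

lemma aux_log_le {t : ℝ} (h0 : 0 < t) (h1 : t ≤ 1) : Real.log t ≤ (t - 1) / 2 := by
  have := Real.log_le_sub_one_of_pos h0
  linarith

lemma phi_quad {x : ℝ} (hx0 : 0 ≤ x) (hx2 : x ≤ 2) :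
    (x - 1) ^ 2 ≤ 4 * (x * Real.log x - x + 1) := by
  rcases eq_or_lt_of_le hx0 with h | hx0'
  · simp [← h]
  rcases le_total 1 x with h1 | h1
  · -- 1 ≤ x ≤ 2
    have hint_log : IntervalIntegrable Real.log MeasureTheory.volume 1 x := by
      apply ContinuousOn.intervalIntegrable
      apply Real.continuousOn_log.mono
      intro t ht
      simp only [Set.uIcc_of_le h1] at ht
      simp only [Set.mem_compl_iff, Set.mem_singleton_iff]
      intro h; rw [h] at ht; linarith [ht.1]
    have hlog_int : ∫ t in (1:ℝ)..x, Real.log t = x * Real.log x - x + 1 := by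
      rw [integral_log, Real.log_one]; ring
    have hpoly : ∫ t in (1:ℝ)..x, (t - 1)/2 = (x - 1)^2 / 4 := by
      have : ∀ t : ℝ, HasDerivAt (fun s => (s - 1)^2 / 4) ((t - 1)/2) t := by
        intro t
        have h := (((hasDerivAt_id t).sub_const 1).pow 2).div_const 4
        refine h.congr_deriv ?_; simp; ring
      rw [integral_eq_sub_of_hasDerivAt (fun t _ => this t)
        ((Continuous.intervalIntegrable (by continuity) 1 x))]
      norm_num
    have hmono : ∫ t in (1:ℝ)..x, (t - 1)/2 ≤ ∫ t in (1:ℝ)..x, Real.log t := by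
      apply integral_mono_on h1 (Continuous.intervalIntegrable (by continuity) 1 x) hint_log
      intro t ht
      exact aux_log_ge ht.1 (le_trans ht.2 hx2)
    rw [hpoly, hlog_int] at hmono; linarith
  · -- 0 < x ≤ 1
    have hint_log : IntervalIntegrable Real.log MeasureTheory.volume x 1 := by
      apply ContinuousOn.intervalIntegrable
      apply Real.continuousOn_log.mono
      intro t ht
      simp only [Set.uIcc_of_le h1] at ht
      simp only [Set.mem_compl_iff, Set.mem_singleton_iff]
      intro h; rw [h] at ht; linarith [ht.1]
    have hlog_int : ∫ t in x..(1:ℝ), Real.log t = -(x * Real.log x - x + 1) := by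
      rw [integral_log, Real.log_one]; ring
    have hpoly : ∫ t in x..(1:ℝ), (t - 1)/2 = -((x - 1)^2 / 4) := by
      have : ∀ t : ℝ, HasDerivAt (fun s => (s - 1)^2 / 4) ((t - 1)/2) t := by
        intro t
        have h := (((hasDerivAt_id t).sub_const 1).pow 2).div_const 4
        refine h.congr_deriv ?_; simp; ring
      rw [integral_eq_sub_of_hasDerivAt (fun t _ => this t)
        ((Continuous.intervalIntegrable (by continuity) x 1))]
      norm_num
    have hmono : ∫ t in x..(1:ℝ), Real.log t ≤ ∫ t in x..(1:ℝ), (t - 1)/2 := by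
      apply integral_mono_on h1 hint_log (Continuous.intervalIntegrable (by continuity) x 1)
      intro t ht
      exact aux_log_le (lt_of_lt_of_le hx0' ht.1) ht.2
    rw [hpoly, hlog_int] at hmono; linarith

lemma mul_log_abs_le {x : ℝ} (h0 : 0 ≤ x) (h2 : x ≤ 2) : |x * Real.log x| ≤ 2 := by
  rcases eq_or_lt_of_le h0 with h | h0'
  · simp [← h]
  rcases le_total x 1 with h1 | h1
  · have hneg : Real.log x ≤ 0 := Real.log_nonpos (le_of_lt h0') h1
    have hlow : -Real.log x ≤ x⁻¹ - 1 := by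
      have := Real.log_le_sub_one_of_pos (inv_pos.2 h0')
      rwa [Real.log_inv] at this
    have : x * (-Real.log x) ≤ x * (x⁻¹ - 1) := by
      apply mul_le_mul_of_nonneg_left hlow h0
    have hxx : x * x⁻¹ = 1 := mul_inv_cancel₀ h0'.ne'
    rw [abs_of_nonpos (mul_nonpos_of_nonneg_of_nonpos h0 hneg)]
    nlinarith
  · have hpos : 0 ≤ Real.log x := Real.log_nonneg h1
    have := Real.log_le_sub_one_of_pos (by linarith : (0:ℝ) < x)
    rw [abs_of_nonneg (mul_nonneg h0 hpos)]
    nlinarith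

end Aux

set_option maxHeartbeats 1000000 in
lemma tv_bound {Ω : Type*} [MeasurableSpace Ω] (μ ν : Measure Ω)
    [IsProbabilityMeasure μ] [IsProbabilityMeasure ν] (m : Measure Ω)
    (hm : m = (1 / 2 : ℝ≥0∞) • μ + (1 / 2 : ℝ≥0∞) • ν)
    {ε : ℝ} (hε : 0 < ε) (ψ : Ω → ℝ) (hψm : Measurable ψ) (hψ : ∀ x, |ψ x| ≤ 1) :
    |∫ x, ψ x ∂ν - ∫ x, ψ x ∂μ| ≤ 2 * ε + (2 / ε) * (klDiv ν m).toReal := by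
  haveI : IsProbabilityMeasure m := by
    constructor
    rw [hm]
    simp only [Measure.add_apply, Measure.smul_apply, smul_eq_mul, measure_univ, mul_one]
    exact ENNReal.add_halves 1
  have hν_ac : ν ≪ m := by
    intro s hs
    rw [hm] at hs
    simp only [Measure.add_apply, Measure.smul_apply, smul_eq_mul] at hs
    have h2 : (1/2 : ℝ≥0∞) * ν s = 0 := by
      by_contra h
      exact h (by
        have := add_eq_zero.mp hs
        exact this.2)
    have : (1/2 : ℝ≥0∞) ≠ 0 := by norm_num
    simpa [this] using h2
  set g : Ω → ℝ := fun x => (ν.rnDeriv m x).toReal with hg_def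
  have hg_meas : Measurable g := (Measure.measurable_rnDeriv ν m).ennreal_toReal
  have hg_nonneg : ∀ x, 0 ≤ g x := fun x => ENNReal.toReal_nonneg
  -- g ≤ 2 a.e.
  have hg2' : ν.rnDeriv m ≤ᵐ[m] fun _ => (2 : ℝ≥0∞) := by
    apply ae_le_of_forall_setLIntegral_le_of_sigmaFinite (Measure.measurable_rnDeriv ν m)
    intro s hs _
    rw [Measure.setLIntegral_rnDeriv hν_ac, setLIntegral_const]
    calc ν s ≤ μ s + ν s := le_add_self
      _ = 2 * m s := by
          rw [hm]
          simp only [Measure.add_apply, Measure.smul_apply, smul_eq_mul]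
          rw [mul_add, ← mul_assoc, ← mul_assoc]
          have h2 : (2:ℝ≥0∞) * (1/2) = 1 := by
            rw [one_div, ENNReal.mul_inv_cancel (by norm_num) (by norm_num)]
          rw [h2, one_mul, one_mul]
  have hg2 : ∀ᵐ x ∂m, g x ≤ 2 := by
    filter_upwards [hg2', Measure.rnDeriv_lt_top ν m] with x hx hlt
    calc g x ≤ (2 : ℝ≥0∞).toReal := ENNReal.toReal_mono (by norm_num) hx
      _ = 2 := by norm_num
  -- integrability helpers
  have hbdd : ∀ (f : Ω → ℝ), Measurable f → (∀ᵐ x ∂m, |f x| ≤ 9) → Integrable f m := by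
    intro f hf hb
    exact ⟨hf.aestronglyMeasurable, HasFiniteIntegral.of_bounded (C := 9) (by
      filter_upwards [hb] with x hx; simpa using hx)⟩
  have hψ_int : ∀ (ρ : Measure Ω) [IsFiniteMeasure ρ], Integrable ψ ρ := by
    intro ρ _
    exact ⟨hψm.aestronglyMeasurable, HasFiniteIntegral.of_bounded (C := 1)
      (ae_of_all _ fun x => by simpa using hψ x)⟩
  have hg_int : Integrable g m := hbdd g hg_meas (by
    filter_upwards [hg2] with x hx
    rw [abs_of_nonneg (hg_nonneg x)]; linarith)
  have hgψ_int : Integrable (fun x => g x * ψ x) m := hbdd _ (hg_meas.mul hψm) (by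
    filter_upwards [hg2] with x hx
    rw [abs_mul]
    calc |g x| * |ψ x| ≤ 2 * 1 := by
          apply mul_le_mul _ (hψ x) (abs_nonneg _) (by norm_num)
          rw [abs_of_nonneg (hg_nonneg x)]; exact hx
      _ ≤ 9 := by norm_num)
  have hglog_int : Integrable (fun x => g x * Real.log (g x)) m :=
    hbdd _ (hg_meas.mul (Real.measurable_log.comp hg_meas)) (by
      filter_upwards [hg2] with x hx
      exact (mul_log_abs_le (hg_nonneg x) hx).trans (by norm_num))
  have hsq_int : Integrable (fun x => (g x - 1) ^ 2) m := hbdd _ (by measurability) (by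
    filter_upwards [hg2] with x hx
    have := hg_nonneg x
    rw [abs_of_nonneg (sq_nonneg _)]
    nlinarith)
  have habs_int : Integrable (fun x => |g x - 1|) m := hbdd _ (by measurability) (by
    filter_upwards [hg2] with x hx
    have := hg_nonneg x
    rw [abs_abs]
    rw [abs_le]; constructor <;> nlinarith)
  have hdiff_int : Integrable (fun x => g x * ψ x - ψ x) m := hgψ_int.sub (hψ_int m)
  have hdiffabs_int : Integrable (fun x => |g x * ψ x - ψ x|) m := hdiff_int.abs
  have h1_int : Integrable (fun x => g x * Real.log (g x) - g x) m := hglog_int.sub hg_int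
  -- KL divergence is finite and equals ∫ g log g dm
  have hsmul : ∀ x, g x • llr ν m x = g x * Real.log (g x) := fun x => rfl
  have hllr_int : Integrable (llr ν m) ν := by
    rw [← MeasureTheory.integrable_rnDeriv_smul_iff hν_ac]
    change Integrable (fun x => g x * Real.log (g x)) m
    exact hglog_int
  have hKL_eq : ∫ x, llr ν m x ∂ν = ∫ x, g x * Real.log (g x) ∂m := by
    rw [← MeasureTheory.integral_rnDeriv_smul hν_ac]
    rfl
  have hg_mean : ∫ x, g x ∂m = 1 := by
    rw [hg_def, Measure.integral_toReal_rnDeriv hν_ac]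
    simp
  have hphi_nonneg : ∀ᵐ x ∂m, 0 ≤ g x * Real.log (g x) - g x + 1 := by
    filter_upwards [hg2] with x hx
    nlinarith [phi_quad (hg_nonneg x) hx, sq_nonneg (g x - 1)]
  have hphi_int : Integrable (fun x => g x * Real.log (g x) - g x + 1) m :=
    h1_int.add (integrable_const 1)
  have hphi_integral : ∫ x, (g x * Real.log (g x) - g x + 1) ∂m
      = ∫ x, llr ν m x ∂ν := by
    rw [integral_add h1_int (integrable_const 1),
      integral_sub hglog_int hg_int, hg_mean, hKL_eq]
    simp
  have hKL_nonneg : 0 ≤ ∫ x, llr ν m x ∂ν := by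
    rw [← hphi_integral]
    exact integral_nonneg_of_ae hphi_nonneg
  have hKL_val : (klDiv ν m).toReal = ∫ x, llr ν m x ∂ν := by
    rw [klDiv, if_pos ⟨hν_ac, hllr_int⟩, ENNReal.toReal_ofReal hKL_nonneg]
  -- mean value under m
  have hmean : ∫ x, ψ x ∂m = (1/2) * ∫ x, ψ x ∂μ + (1/2) * ∫ x, ψ x ∂ν := by
    rw [hm, integral_add_measure ((hψ_int μ).smul_measure (by norm_num))
      ((hψ_int ν).smul_measure (by norm_num)),
      integral_smul_measure, integral_smul_measure]
    norm_num
  -- ∫ ψ dν = ∫ g ψ dm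
  have hν_integral : ∫ x, ψ x ∂ν = ∫ x, g x * ψ x ∂m := by
    rw [← MeasureTheory.integral_rnDeriv_smul hν_ac]
    rfl
  -- chain of inequalities
  have step1 : |∫ x, ψ x ∂ν - ∫ x, ψ x ∂μ| = 2 * |∫ x, ψ x ∂ν - ∫ x, ψ x ∂m| := by
    rw [hmean]
    rw [show ∫ x, ψ x ∂ν - ((1/2) * ∫ x, ψ x ∂μ + (1/2) * ∫ x, ψ x ∂ν)
      = (1/2) * (∫ x, ψ x ∂ν - ∫ x, ψ x ∂μ) by ring, abs_mul]
    rw [abs_of_nonneg (by norm_num : (0:ℝ) ≤ 1/2)]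
    ring
  have step2 : |∫ x, ψ x ∂ν - ∫ x, ψ x ∂m| ≤ ∫ x, |g x - 1| ∂m := by
    rw [hν_integral, ← integral_sub hgψ_int (hψ_int m)]
    calc |∫ x, (g x * ψ x - ψ x) ∂m| ≤ ∫ x, |g x * ψ x - ψ x| ∂m := by
          have := norm_integral_le_integral_norm (μ := m) (fun x => g x * ψ x - ψ x)
          simpa [Real.norm_eq_abs] using this
      _ ≤ ∫ x, |g x - 1| ∂m := by
          apply integral_mono_ae hdiffabs_int habs_int
          apply ae_of_all
          intro x
          simp only
          rw [show g x * ψ x - ψ x = (g x - 1) * ψ x by ring, abs_mul]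
          calc |g x - 1| * |ψ x| ≤ |g x - 1| * 1 :=
                mul_le_mul_of_nonneg_left (hψ x) (abs_nonneg _)
            _ = |g x - 1| := mul_one _
  have step3 : ∫ x, |g x - 1| ∂m ≤ ε + (1/(4*ε)) * ∫ x, (g x - 1)^2 ∂m := by
    have hpt : ∀ᵐ x ∂m, |g x - 1| ≤ ε + (g x - 1)^2 / (4*ε) := by
      apply ae_of_all
      intro x
      have h4ε : 0 < 4 * ε := by linarith
      rw [← sub_le_iff_le_add', le_div_iff₀ h4ε]
      nlinarith [sq_nonneg (|g x - 1| - 2*ε), sq_abs (g x - 1), abs_nonneg (g x - 1)]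
    calc ∫ x, |g x - 1| ∂m ≤ ∫ x, (ε + (g x - 1)^2 / (4*ε)) ∂m := by
          apply integral_mono_ae habs_int _ hpt
          exact (integrable_const ε).add (hsq_int.div_const _)
      _ = ε + (1/(4*ε)) * ∫ x, (g x - 1)^2 ∂m := by
          rw [integral_add (integrable_const ε) (hsq_int.div_const _), integral_const,
            integral_div]
          simp
          ring
  have step4 : ∫ x, (g x - 1)^2 ∂m ≤ 4 * (klDiv ν m).toReal := by
    rw [hKL_val, ← hphi_integral, ← integral_const_mul]
    apply integral_mono_ae hsq_int (hphi_int.const_mul 4)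
    filter_upwards [hg2] with x hx
    exact phi_quad (hg_nonneg x) hx
  have hKLnn : 0 ≤ (klDiv ν m).toReal := ENNReal.toReal_nonneg
  calc |∫ x, ψ x ∂ν - ∫ x, ψ x ∂μ| = 2 * |∫ x, ψ x ∂ν - ∫ x, ψ x ∂m| := step1
    _ ≤ 2 * (ε + (1/(4*ε)) * (4 * (klDiv ν m).toReal)) := by
        have := step2.trans step3
        have h1 : (0:ℝ) ≤ 1/(4*ε) := by positivity
        nlinarith [mul_le_mul_of_nonneg_left step4 h1]
    _ = 2 * ε + (2/ε) * (klDiv ν m).toReal := by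
        field_simp

/-- If the Jensen–Shannon divergences
`d_JS(νₙ‖μ) = d_KL(νₙ‖mₙ) + d_KL(μ‖mₙ)`, with midpoint measures
`mₙ = (1/2)·μ + (1/2)·νₙ`, tend to zero, then the supremum of
`|∫ ψ dνₙ − ∫ ψ dμ|` over all measurable `ψ` with `sup|ψ| ≤ 1` tends to zero;
in particular the expectations `∫ ψ dνₙ` converge to `∫ ψ dμ`, uniformly over
all such `ψ`. -/
theorem tendsto_integrals_of_tendsto_jensenShannon {Ω : Type*} [MeasurableSpace Ω]
    (μ : Measure Ω) [IsProbabilityMeasure μ]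
    (ν : ℕ → Measure Ω) [∀ n, IsProbabilityMeasure (ν n)]
    (m : ℕ → Measure Ω) (hm : ∀ n, m n = (1 / 2 : ℝ≥0∞) • μ + (1 / 2 : ℝ≥0∞) • ν n)
    (hJS : Tendsto (fun n => klDiv (ν n) (m n) + klDiv μ (m n)) atTop (nhds 0)) :
    Tendsto
      (fun n => sSup {r : ℝ | ∃ ψ : Ω → ℝ, Measurable ψ ∧ (∀ x, |ψ x| ≤ 1) ∧
        r = |∫ x, ψ x ∂(ν n) - ∫ x, ψ x ∂μ|}) atTop (nhds 0) ∧
    ∀ ε > (0 : ℝ), ∃ N : ℕ, ∀ n ≥ N, ∀ ψ : Ω → ℝ, Measurable ψ → (∀ x, |ψ x| ≤ 1) →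
      |∫ x, ψ x ∂(ν n) - ∫ x, ψ x ∂μ| ≤ ε := by
  have hKL0 : Tendsto (fun n => (klDiv (ν n) (m n)).toReal) atTop (nhds 0) := by
    have h1 : Tendsto (fun n => klDiv (ν n) (m n)) atTop (nhds 0) :=
      tendsto_of_tendsto_of_tendsto_of_le_of_le tendsto_const_nhds hJS
        (fun n => zero_le) (fun n => le_self_add)
    have h2 := (ENNReal.tendsto_toReal (a := 0) (by norm_num)).comp h1
    exact h2
  have key : ∀ ε > (0 : ℝ), ∃ N : ℕ, ∀ n ≥ N, ∀ ψ : Ω → ℝ, Measurable ψ →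
      (∀ x, |ψ x| ≤ 1) → |∫ x, ψ x ∂(ν n) - ∫ x, ψ x ∂μ| ≤ ε := by
    intro ε hε
    have hε4 : 0 < ε / 4 := by linarith
    have hev : ∀ᶠ n in atTop, (klDiv (ν n) (m n)).toReal < ε ^ 2 / 16 :=
      (tendsto_order.mp hKL0).2 (ε ^ 2 / 16) (by positivity)
    obtain ⟨N, hN⟩ := eventually_atTop.mp hev
    refine ⟨N, fun n hn ψ hψm hψ => ?_⟩
    have hb := tv_bound μ (ν n) (m n) (hm n) hε4 ψ hψm hψ
    have hK : (klDiv (ν n) (m n)).toReal ≤ ε ^ 2 / 16 := (hN n hn).le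
    have hmul : (2 / (ε / 4)) * (klDiv (ν n) (m n)).toReal
        ≤ (2 / (ε / 4)) * (ε ^ 2 / 16) := by
      apply mul_le_mul_of_nonneg_left hK (by positivity)
    have heq : (2 / (ε / 4)) * (ε ^ 2 / 16) = ε / 2 := by
      field_simp
      ring
    calc |∫ x, ψ x ∂(ν n) - ∫ x, ψ x ∂μ|
        ≤ 2 * (ε / 4) + (2 / (ε / 4)) * (klDiv (ν n) (m n)).toReal := hb
      _ ≤ 2 * (ε / 4) + ε / 2 := by rw [← heq]; linarith
      _ = ε := by ring
  refine ⟨?_, key⟩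
  rw [Metric.tendsto_atTop]
  intro ε hε
  obtain ⟨N, hN⟩ := key (ε / 2) (by linarith)
  refine ⟨N, fun n hn => ?_⟩
  set S := {r : ℝ | ∃ ψ : Ω → ℝ, Measurable ψ ∧ (∀ x, |ψ x| ≤ 1) ∧
    r = |∫ x, ψ x ∂(ν n) - ∫ x, ψ x ∂μ|} with hS
  have h0S : (0 : ℝ) ∈ S := by
    refine ⟨fun _ => 0, measurable_const, fun x => by simp, by simp⟩
  have hub : ∀ r ∈ S, r ≤ ε / 2 := by
    rintro r ⟨ψ, h1, h2, rfl⟩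
    exact hN n hn ψ h1 h2
  have h1 : sSup S ≤ ε / 2 := csSup_le ⟨0, h0S⟩ hub
  have h2 : 0 ≤ sSup S := le_csSup ⟨ε / 2, fun r hr => hub r hr⟩ h0S
  rw [Real.dist_eq, sub_zero, abs_of_nonneg h2]
  linarith
end

section
/- Let ρ be a σ-finite measure on a measurable space Ω, and let μ and ν be probability measures on Ω with densities f and g with respect to ρ satisfying f > 0 and g > 0 ρ-almost everywhere. Let D* = f/(f+g). Then ∫ log(D*) dμ + ∫ log(1 − D*) dν = d_JS(μ‖ν) − log 4, where d_JS(μ‖ν) = d_KL(μ‖m) + d_KL(ν‖m) is the Jensen–Shannon divergence with midpoint measure m = (1/2)·μ + (1/2)·ν and d_KL the Kullback–Leibler divergence. -/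
open MeasureTheory ENNReal Filter

lemma gan_aux {Ω : Type*} [MeasurableSpace Ω]
    (ρ : Measure Ω) [SigmaFinite ρ]
    (f g : Ω → ℝ) (hf : Measurable f) (hg : Measurable g)
    (hfpos : ∀ᵐ x ∂ρ, 0 < f x) (hgpos : ∀ᵐ x ∂ρ, 0 < g x)
    (μ : Measure Ω) [IsProbabilityMeasure μ]
    (hμ : μ = ρ.withDensity (fun x => ENNReal.ofReal (f x)))
    (hfint : ∫⁻ x, ENNReal.ofReal (f x) ∂ρ = 1)
    (hgint : ∫⁻ x, ENNReal.ofReal (g x) ∂ρ = 1)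
    (m : Measure Ω) [IsFiniteMeasure m]
    (hm : m = ρ.withDensity (fun x => ENNReal.ofReal ((f x + g x) / 2))) :
    (μ ≪ m) ∧ Integrable (llr μ m) μ ∧ 0 ≤ ∫ x, llr μ m x ∂μ ∧
      ∫ x, Real.log (f x / (f x + g x)) ∂μ = (∫ x, llr μ m x ∂μ) - Real.log 2 := by
  have hfg : Measurable fun x => f x + g x := hf.add hg
  have hMmeas : Measurable fun x => ENNReal.ofReal ((f x + g x) / 2) :=
    (hfg.div_const 2).ennreal_ofReal
  have hDmeas : Measurable fun x => ENNReal.ofReal (2 * f x / (f x + g x)) :=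
    ((hf.const_mul 2).div hfg).ennreal_ofReal
  -- μ as withDensity over m
  have hμm : μ = m.withDensity (fun x => ENNReal.ofReal (2 * f x / (f x + g x))) := by
    rw [hm, ← withDensity_mul ρ hMmeas hDmeas, hμ]
    apply withDensity_congr_ae
    filter_upwards [hfpos, hgpos] with x hfx hgx
    have h2 : 0 < f x + g x := by linarith
    simp only [Pi.mul_apply]
    rw [← ENNReal.ofReal_mul (by positivity)]
    congr 1
    field_simp
  have hac : μ ≪ m := hμm ▸ withDensity_absolutelyContinuous m _
  have hμρ : μ ≪ ρ := hμ ▸ withDensity_absolutelyContinuous ρ _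
  have hfposμ : ∀ᵐ x ∂μ, 0 < f x := hfpos.filter_mono hμρ.ae_le
  have hgposμ : ∀ᵐ x ∂μ, 0 < g x := hgpos.filter_mono hμρ.ae_le
  have hrn : μ.rnDeriv m =ᵐ[m] fun x => ENNReal.ofReal (2 * f x / (f x + g x)) := by
    rw [hμm]; exact Measure.rnDeriv_withDensity m hDmeas
  set φ : Ω → ℝ := fun x => Real.log (2 * f x / (f x + g x)) with hφdef
  have hφmeas : Measurable φ := ((hf.const_mul 2).div hfg).log
  have hllr : llr μ m =ᵐ[μ] φ := by
    filter_upwards [hrn.filter_mono hac.ae_le, hfposμ, hgposμ] with x hx hfx hgx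
    have h2 : 0 < f x + g x := by linarith
    have hx' : llr μ m x = Real.log ((μ.rnDeriv m x).toReal) := rfl
    rw [hx', hx, ENNReal.toReal_ofReal (by positivity)]
  -- integrability of f and g over ρ, with integral 1
  have hIf : Integrable f ρ := by
    refine ⟨hf.aestronglyMeasurable, ?_⟩
    have : ∫⁻ x, ‖f x‖₊ ∂ρ = 1 := by
      rw [← hfint]
      apply lintegral_congr_ae
      filter_upwards [hfpos] with x hx
      rw [← enorm_eq_nnnorm, ← ofReal_norm, Real.norm_of_nonneg hx.le]
    simp [HasFiniteIntegral, enorm_eq_nnnorm, this]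
  have hIg : Integrable g ρ := by
    refine ⟨hg.aestronglyMeasurable, ?_⟩
    have : ∫⁻ x, ‖g x‖₊ ∂ρ = 1 := by
      rw [← hgint]
      apply lintegral_congr_ae
      filter_upwards [hgpos] with x hx
      rw [← enorm_eq_nnnorm, ← ofReal_norm, Real.norm_of_nonneg hx.le]
    simp [HasFiniteIntegral, enorm_eq_nnnorm, this]
  have hintf : ∫ x, f x ∂ρ = 1 := by
    rw [integral_eq_lintegral_of_nonneg_ae (hfpos.mono fun x h => h.le) hf.aestronglyMeasurable,
      hfint, ENNReal.toReal_one]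
  have hintg : ∫ x, g x ∂ρ = 1 := by
    rw [integral_eq_lintegral_of_nonneg_ae (hgpos.mono fun x h => h.le) hg.aestronglyMeasurable,
      hgint, ENNReal.toReal_one]
  -- integrability of f * φ over ρ
  have hbound_int : Integrable (fun x => Real.log 2 * f x + (f x + g x) / 2) ρ :=
    (hIf.const_mul (Real.log 2)).add ((hIf.add hIg).div_const 2)
  have hfφ_int : Integrable (fun x => f x * φ x) ρ := by
    apply Integrable.mono' hbound_int (hf.mul hφmeas).aestronglyMeasurable
    filter_upwards [hfpos, hgpos] with x hfx hgx
    have h2 : 0 < f x + g x := by linarith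
    have hlog2 : (0:ℝ) ≤ Real.log 2 := Real.log_nonneg (by norm_num)
    have hub : φ x ≤ Real.log 2 := by
      have harg : 2 * f x / (f x + g x) ≤ 2 := by
        rw [div_le_iff₀ h2]; linarith
      have := Real.log_le_log (show (0:ℝ) < 2 * f x / (f x + g x) by positivity) harg
      simpa using this
    have hinv : -φ x = Real.log ((f x + g x) / (2 * f x)) := by
      rw [← Real.log_inv]; congr 1; rw [inv_div]
    have hlb : Real.log ((f x + g x) / (2 * f x)) ≤ (f x + g x) / (2 * f x) - 1 :=
      Real.log_le_sub_one_of_pos (by positivity)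
    have e1 : f x * ((f x + g x) / (2 * f x) - 1) = (g x - f x) / 2 := by
      field_simp; ring
    have e2 : f x * (-φ x) ≤ (g x - f x) / 2 := by
      rw [hinv, ← e1]
      exact mul_le_mul_of_nonneg_left hlb hfx.le
    rw [Real.norm_eq_abs, abs_le]
    simp only [Pi.mul_apply]
    constructor
    · nlinarith
    · nlinarith
  -- transfer llr integral/integrability to ρ
  have hIntφμ : Integrable φ μ := by
    rw [hμ, integrable_withDensity_iff hf.ennreal_ofReal
      (Eventually.of_forall fun x => ENNReal.ofReal_lt_top)]
    apply hfφ_int.congr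
    filter_upwards [hfpos] with x hx
    rw [ENNReal.toReal_ofReal hx.le, mul_comm]
  have hIntllr : Integrable (llr μ m) μ := hIntφμ.congr hllr.symm
  have hInt_eq : ∫ x, llr μ m x ∂μ = ∫ x, f x * φ x ∂ρ := by
    rw [integral_congr_ae hllr, hμ]
    rw [show (fun x => ENNReal.ofReal (f x)) = (fun x => ((f x).toNNReal : ℝ≥0∞)) from rfl,
      integral_withDensity_eq_integral_smul hf.real_toNNReal φ]
    apply integral_congr_ae
    filter_upwards [hfpos] with x hx
    rw [NNReal.smul_def, Real.coe_toNNReal _ hx.le, smul_eq_mul]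
  have hnonneg : 0 ≤ ∫ x, llr μ m x ∂μ := by
    rw [hInt_eq]
    have hpt : ∀ᵐ x ∂ρ, (f x - g x) / 2 ≤ f x * φ x := by
      filter_upwards [hfpos, hgpos] with x hfx hgx
      have h2 : 0 < f x + g x := by linarith
      have hinv : -φ x = Real.log ((f x + g x) / (2 * f x)) := by
        rw [← Real.log_inv]; congr 1; rw [inv_div]
      have hlb : Real.log ((f x + g x) / (2 * f x)) ≤ (f x + g x) / (2 * f x) - 1 :=
        Real.log_le_sub_one_of_pos (by positivity)
      have e1 : f x * ((f x + g x) / (2 * f x) - 1) = (g x - f x) / 2 := by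
        field_simp; ring
      have e2 : f x * (-φ x) ≤ (g x - f x) / 2 := by
        rw [hinv, ← e1]
        exact mul_le_mul_of_nonneg_left hlb hfx.le
      nlinarith
    have h0 : ∫ x, (f x - g x) / 2 ∂ρ = 0 := by
      rw [integral_div, integral_sub hIf hIg, hintf, hintg]; norm_num
    calc (0:ℝ) = ∫ x, (f x - g x) / 2 ∂ρ := h0.symm
      _ ≤ ∫ x, f x * φ x ∂ρ :=
        integral_mono_ae ((hIf.sub hIg).div_const 2) hfφ_int hpt
  -- decomposition φ = log(f/(f+g)) + log 2
  have hφ_eq : (fun x => Real.log (f x / (f x + g x))) =ᵐ[μ] fun x => φ x - Real.log 2 := by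
    filter_upwards [hfposμ, hgposμ] with x hfx hgx
    have h2 : 0 < f x + g x := by linarith
    have : 2 * f x / (f x + g x) = 2 * (f x / (f x + g x)) := by ring
    simp only [hφdef, this]
    rw [Real.log_mul two_ne_zero (by positivity)]
    ring
  refine ⟨hac, hIntllr, hnonneg, ?_⟩
  rw [integral_congr_ae hφ_eq, integral_sub hIntφμ (integrable_const _),
    integral_const, probReal_univ, one_smul,
    ← integral_congr_ae hllr]

/-- If `μ, ν` are probability measures with (a.e. positive) densities
`f, g` with respect to a σ-finite measure `ρ`, and `D* = f / (f + g)` is the optimal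
discriminator, then the GAN loss at `D*` equals the Jensen–Shannon divergence
`d_JS(μ‖ν) = d_KL(μ‖m) + d_KL(ν‖m)` (with `m = (1/2)·μ + (1/2)·ν`) minus `log 4`. -/
theorem gan_loss_at_optimal_discriminator {Ω : Type*} [MeasurableSpace Ω]
    (ρ : Measure Ω) [SigmaFinite ρ]
    (f g : Ω → ℝ) (hf : Measurable f) (hg : Measurable g)
    (hfpos : ∀ᵐ x ∂ρ, 0 < f x) (hgpos : ∀ᵐ x ∂ρ, 0 < g x)
    (μ ν : Measure Ω) [IsProbabilityMeasure μ] [IsProbabilityMeasure ν]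
    (hμ : μ = ρ.withDensity (fun x => ENNReal.ofReal (f x)))
    (hν : ν = ρ.withDensity (fun x => ENNReal.ofReal (g x)))
    (Dstar : Ω → ℝ) (hD : Dstar = fun x => f x / (f x + g x))
    (m : Measure Ω) (hm : m = (1 / 2 : ℝ≥0∞) • μ + (1 / 2 : ℝ≥0∞) • ν) :
    ∫ x, Real.log (Dstar x) ∂μ + ∫ x, Real.log (1 - Dstar x) ∂ν
      = (klDiv μ m + klDiv ν m).toReal - Real.log 4 := by
  have hfint : ∫⁻ x, ENNReal.ofReal (f x) ∂ρ = 1 := by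
    have h := measure_univ (μ := μ)
    rwa [hμ, withDensity_apply _ MeasurableSet.univ, setLIntegral_univ] at h
  have hgint : ∫⁻ x, ENNReal.ofReal (g x) ∂ρ = 1 := by
    have h := measure_univ (μ := ν)
    rwa [hν, withDensity_apply _ MeasurableSet.univ, setLIntegral_univ] at h
  haveI hmfin : IsFiniteMeasure m := by
    constructor
    rw [hm]
    simp only [Measure.coe_add, Pi.add_apply, Measure.smul_apply, smul_eq_mul,
      measure_univ, mul_one]
    norm_num
  have hmf : m = ρ.withDensity (fun x => ENNReal.ofReal ((f x + g x) / 2)) := by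
    rw [hm, hμ, hν, ← withDensity_smul _ hf.ennreal_ofReal,
      ← withDensity_smul _ hg.ennreal_ofReal,
      ← withDensity_add_left (hf.ennreal_ofReal.const_smul ((1:ℝ≥0∞)/2))]
    apply withDensity_congr_ae
    filter_upwards [hfpos, hgpos] with x hfx hgx
    simp only [Pi.add_apply, Pi.smul_apply, smul_eq_mul]
    rw [ENNReal.ofReal_div_of_pos (by norm_num), ENNReal.ofReal_add hfx.le hgx.le,
      ENNReal.ofReal_ofNat, ENNReal.add_div]
    simp [ENNReal.div_eq_inv_mul, one_div]
  have hmg : m = ρ.withDensity (fun x => ENNReal.ofReal ((g x + f x) / 2)) := by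
    rw [hmf]; congr 1; funext x; rw [add_comm]
  obtain ⟨hac1, hint1, hpos1, heq1⟩ :=
    gan_aux ρ f g hf hg hfpos hgpos μ hμ hfint hgint m hmf
  obtain ⟨hac2, hint2, hpos2, heq2⟩ :=
    gan_aux ρ g f hg hf hgpos hfpos ν hν hgint hfint m hmg
  have hkl1 : klDiv μ m = ENNReal.ofReal (∫ x, llr μ m x ∂μ) := by
    rw [klDiv, if_pos ⟨hac1, hint1⟩]
  have hkl2 : klDiv ν m = ENNReal.ofReal (∫ x, llr ν m x ∂ν) := by
    rw [klDiv, if_pos ⟨hac2, hint2⟩]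
  have hterm1 : ∫ x, Real.log (Dstar x) ∂μ
      = (∫ x, llr μ m x ∂μ) - Real.log 2 := by
    rw [hD]; exact heq1
  have hterm2 : ∫ x, Real.log (1 - Dstar x) ∂ν
      = (∫ x, llr ν m x ∂ν) - Real.log 2 := by
    rw [← heq2]
    apply integral_congr_ae
    have hνρ : ν ≪ ρ := hν ▸ withDensity_absolutelyContinuous ρ _
    filter_upwards [hfpos.filter_mono hνρ.ae_le, hgpos.filter_mono hνρ.ae_le]
      with x hfx hgx
    have h2 : 0 < f x + g x := by linarith
    simp only [hD]
    rw [show 1 - f x / (f x + g x) = g x / (g x + f x) from by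
      rw [add_comm (g x) (f x), eq_div_iff h2.ne', sub_mul, one_mul,
        div_mul_cancel₀ _ h2.ne']
      ring]
  have hlog4 : Real.log 4 = Real.log 2 + Real.log 2 := by
    rw [show (4:ℝ) = 2 * 2 by norm_num, Real.log_mul two_ne_zero two_ne_zero]
  rw [hterm1, hterm2, hkl1, hkl2, ← ENNReal.ofReal_add hpos1 hpos2,
    ENNReal.toReal_ofReal (add_nonneg hpos1 hpos2), hlog4]
  ring
end

section
/- Let ρ be a σ-finite measure on a measurable space Ω, and let μ and ν be probability measures on Ω with densities f and g with respect to ρ satisfying f > 0 and g > 0 ρ-almost everywhere. Let D* = f/(f+g). Then for every measurable function D : Ω → ℝ with 0 < D(x) < 1 for all x, one has ∫ log(D) dμ + ∫ log(1 − D) dν ≤ ∫ log(D*) dμ + ∫ log(1 − D*) dν, where the integrals are extended-real-valued (the integrands are nonpositive up to an additive bounded correction, so all integrals are well defined in [−∞, 0] after suitable normalization). -/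
open MeasureTheory ENNReal

lemma log_ineq (a b t : ℝ) (ha : 0 < a) (hb : 0 < b) (ht0 : 0 < t) (ht1 : t < 1) :
    a * Real.log t + b * Real.log (1 - t) ≤
      a * Real.log (a / (a + b)) + b * Real.log (b / (a + b)) := by
  have hs : 0 < a + b := by linarith
  have h1t : 0 < 1 - t := by linarith
  have k1 : Real.log (t * ((a+b)/a)) ≤ t * ((a+b)/a) - 1 :=
    Real.log_le_sub_one_of_pos (by positivity)
  have k2 : Real.log ((1-t) * ((a+b)/b)) ≤ (1-t) * ((a+b)/b) - 1 :=
    Real.log_le_sub_one_of_pos (by positivity)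
  have e1 : Real.log (t * ((a+b)/a)) = Real.log t - Real.log (a/(a+b)) := by
    rw [Real.log_mul ht0.ne' (by positivity), Real.log_div ha.ne' hs.ne',
      Real.log_div hs.ne' ha.ne']; ring
  have e2 : Real.log ((1-t) * ((a+b)/b)) = Real.log (1-t) - Real.log (b/(a+b)) := by
    rw [Real.log_mul h1t.ne' (by positivity), Real.log_div hb.ne' hs.ne',
      Real.log_div hs.ne' hb.ne']; ring
  rw [e1] at k1; rw [e2] at k2
  have m1 := mul_le_mul_of_nonneg_left k1 ha.le
  have m2 := mul_le_mul_of_nonneg_left k2 hb.le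
  have r1 : a * (t * ((a+b)/a) - 1) = t * (a+b) - a := by field_simp
  have r2 : b * ((1-t) * ((a+b)/b) - 1) = (1-t) * (a+b) - b := by field_simp
  rw [r1] at m1; rw [r2] at m2
  nlinarith [m1, m2]

/-- If `μ, ν` are probability measures with (a.e. positive) densities
`f, g` with respect to a σ-finite measure `ρ`, then the binary cross-entropy GAN loss
`L(D) = ∫ log D dμ + ∫ log (1 − D) dν` is maximized, over all measurable discriminators
`D : Ω → (0,1)`, at `D* = f / (f + g)`.

Since `0 < D < 1` the integrands `log D` and `log (1 − D)` are nonpositive, so the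
extended-real-valued integrals are encoded via lower Lebesgue integrals of their
negations: `L(D) ≤ L(D*)` in `[−∞, 0]` is exactly `−L(D*) ≤ −L(D)` in `ℝ≥0∞`. -/
theorem gan_loss_le_optimal_discriminator {Ω : Type*} [MeasurableSpace Ω]
    (ρ : Measure Ω) [SigmaFinite ρ]
    (f g : Ω → ℝ) (hf : Measurable f) (hg : Measurable g)
    (hfpos : ∀ᵐ x ∂ρ, 0 < f x) (hgpos : ∀ᵐ x ∂ρ, 0 < g x)
    (μ ν : Measure Ω) [IsProbabilityMeasure μ] [IsProbabilityMeasure ν]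
    (hμ : μ = ρ.withDensity (fun x => ENNReal.ofReal (f x)))
    (hν : ν = ρ.withDensity (fun x => ENNReal.ofReal (g x)))
    (Dstar : Ω → ℝ) (hDstar : Dstar = fun x => f x / (f x + g x))
    (D : Ω → ℝ) (hD : Measurable D) (hD01 : ∀ x, 0 < D x ∧ D x < 1) :
    (∫⁻ x, ENNReal.ofReal (-Real.log (Dstar x)) ∂μ)
        + ∫⁻ x, ENNReal.ofReal (-Real.log (1 - Dstar x)) ∂ν
      ≤ (∫⁻ x, ENNReal.ofReal (-Real.log (D x)) ∂μ)
        + ∫⁻ x, ENNReal.ofReal (-Real.log (1 - D x)) ∂ν := by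
  subst hμ hν hDstar
  have hfm : Measurable fun x => ENNReal.ofReal (f x) := hf.ennreal_ofReal
  have hgm : Measurable fun x => ENNReal.ofReal (g x) := hg.ennreal_ofReal
  have hDs : Measurable fun x => f x / (f x + g x) := hf.div (hf.add hg)
  have m1 : Measurable fun x => ENNReal.ofReal (-Real.log (f x / (f x + g x))) :=
    (hDs.log.neg).ennreal_ofReal
  have m2 : Measurable fun x => ENNReal.ofReal (-Real.log (1 - f x / (f x + g x))) :=
    (((measurable_const.sub hDs).log).neg).ennreal_ofReal
  have m3 : Measurable fun x => ENNReal.ofReal (-Real.log (D x)) := hD.log.neg.ennreal_ofReal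
  have m4 : Measurable fun x => ENNReal.ofReal (-Real.log (1 - D x)) :=
    ((measurable_const.sub hD).log).neg.ennreal_ofReal
  rw [lintegral_withDensity_eq_lintegral_mul ρ hfm m1,
    lintegral_withDensity_eq_lintegral_mul ρ hgm m2,
    lintegral_withDensity_eq_lintegral_mul ρ hfm m3,
    lintegral_withDensity_eq_lintegral_mul ρ hgm m4]
  simp only [Pi.mul_apply]
  rw [← lintegral_add_left (show Measurable fun a => ENNReal.ofReal (f a) * ENNReal.ofReal (-Real.log (f a / (f a + g a))) from hfm.mul m1),
    ← lintegral_add_left (show Measurable fun a => ENNReal.ofReal (f a) * ENNReal.ofReal (-Real.log (D a)) from hfm.mul m3)]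
  refine lintegral_mono_ae ?_
  filter_upwards [hfpos, hgpos] with x hfx hgx
  obtain ⟨ht0, ht1⟩ := hD01 x
  have hs : 0 < f x + g x := by linarith
  have hDs0 : 0 < f x / (f x + g x) := by positivity
  have hDs1 : f x / (f x + g x) < 1 := by
    rw [div_lt_one hs]; linarith
  have h1m : 1 - f x / (f x + g x) = g x / (f x + g x) := by
    field_simp; ring
  have key := log_ineq (f x) (g x) (D x) hfx hgx ht0 ht1
  simp only [Pi.mul_apply, Pi.add_apply, h1m]
  have nn1 : 0 ≤ -Real.log (f x / (f x + g x)) := by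
    simp only [neg_nonneg]; exact Real.log_nonpos hDs0.le hDs1.le
  have nn2 : 0 ≤ -Real.log (g x / (f x + g x)) := by
    simp only [neg_nonneg]
    refine Real.log_nonpos (by positivity) ?_
    rw [div_le_one hs]; linarith
  have nn3 : 0 ≤ -Real.log (D x) := by
    simp only [neg_nonneg]; exact Real.log_nonpos ht0.le ht1.le
  have nn4 : 0 ≤ -Real.log (1 - D x) := by
    simp only [neg_nonneg]; exact Real.log_nonpos (by linarith) (by linarith)
  rw [← ENNReal.ofReal_mul hfx.le, ← ENNReal.ofReal_mul hgx.le,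
    ← ENNReal.ofReal_mul hfx.le, ← ENNReal.ofReal_mul hgx.le,
    ← ENNReal.ofReal_add (by positivity) (by positivity),
    ← ENNReal.ofReal_add (by positivity) (by positivity)]
  exact ENNReal.ofReal_le_ofReal (by nlinarith [key])
end
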